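/- Lemma 1 (classic Byzantine resilience of Krum with explicit constant): Let m, q be integers with 2q + 2 < m. Let v_1, …, v_m be i.i.d. random vectors in ℝ^d with E[v_i] = g and E[‖v_i − g‖²] ≤ V. Let B ⊆ {1,…,m} with |B| ≤ q, and let ṽ_i = v_i for i ∉ B while ṽ_i for i ∈ B are arbitrary random vectors in ℝ^d (measurable, possibly depending on all the v_j). Define the Krum score s(i) = min over subsets N ⊆ {1,…,m}\{i} with |N| = m − q − 2 of Σ_{j∈N} ‖ṽ_i − ṽ_j‖², and let Krum({ṽ_i : i ∈ [m]}) = ṽ_k for k minimizing s(i) (fixed tie-breaking). Then E[‖Krum({ṽ_i : i ∈ [m]}) − g‖²] ≤ Δ₀, where Δ₀ = (6(m−q) + (4q(m−q−2) + 4q²(m−q−1))/(m−2q−2)) V. -/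

import Mathlib

set_option maxHeartbeats 1000000


open MeasureTheory ProbabilityTheory

/-- The Krum score of index `i` on inputs `w : Fin m → ℝ^d` with `q` assumed Byzantine
workers: the minimum, over all subsets `N ⊆ {1,…,m} \ {i}` with `|N| = m - q - 2`, of
`∑_{j ∈ N} ‖w i - w j‖²` (the sum of squared distances to the `m - q - 2` nearest
neighbors of `w i`). -/
noncomputable def krumScore {m d : ℕ} (q : ℕ)
    (w : Fin m → EuclideanSpace ℝ (Fin d)) (i : Fin m) : ℝ :=
  sInf ((fun N => ∑ j ∈ N, ‖w i - w j‖ ^ 2) ''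
    {N : Finset (Fin m) | N ⊆ Finset.univ.erase i ∧ N.card = m - q - 2})

lemma krumScore_le {m d q : ℕ} (w : Fin m → EuclideanSpace ℝ (Fin d)) (i : Fin m)
    {N : Finset (Fin m)} (h1 : N ⊆ Finset.univ.erase i) (h2 : N.card = m - q - 2) :
    krumScore q w i ≤ ∑ j ∈ N, ‖w i - w j‖ ^ 2 :=
  csInf_le (Set.Finite.bddBelow ((Set.toFinite _).image _)) ⟨N, ⟨h1, h2⟩, rfl⟩

lemma krumScore_attained {m d q : ℕ} (w : Fin m → EuclideanSpace ℝ (Fin d)) (i : Fin m) :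
    ∃ N : Finset (Fin m), N ⊆ Finset.univ.erase i ∧ N.card = m - q - 2 ∧
      krumScore q w i = ∑ j ∈ N, ‖w i - w j‖ ^ 2 := by
  have hcard : m - q - 2 ≤ (Finset.univ.erase i).card := by
    rw [Finset.card_erase_of_mem (Finset.mem_univ i), Finset.card_univ, Fintype.card_fin]
    omega
  obtain ⟨N, hN1, hN2⟩ := Finset.exists_subset_card_eq hcard
  have hne : ((fun N => ∑ j ∈ N, ‖w i - w j‖ ^ 2) ''
      {N : Finset (Fin m) | N ⊆ Finset.univ.erase i ∧ N.card = m - q - 2}).Nonempty :=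
    ⟨_, ⟨N, ⟨hN1, hN2⟩, rfl⟩⟩
  have hfin := (Set.toFinite {N : Finset (Fin m) | N ⊆ Finset.univ.erase i ∧ N.card = m - q - 2}).image
      (fun N => ∑ j ∈ N, ‖w i - w j‖ ^ 2)
  obtain ⟨N', hN', hval⟩ := hne.csInf_mem hfin
  exact ⟨N', hN'.1, hN'.2, hval.symm⟩

lemma sum_sum_sq_le {ι : Type*} (C : Finset ι) {d : ℕ} (a : ι → EuclideanSpace ℝ (Fin d)) :
    ∑ i ∈ C, ∑ j ∈ C, ‖a i - a j‖ ^ 2 ≤ 2 * C.card * ∑ i ∈ C, ‖a i‖ ^ 2 := by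
  have key : ∑ i ∈ C, ∑ j ∈ C, ‖a i - a j‖ ^ 2
      = 2 * C.card * ∑ i ∈ C, ‖a i‖ ^ 2 - 2 * ‖∑ i ∈ C, a i‖ ^ 2 := by
    have h1 : ∀ i j : ι, ‖a i - a j‖ ^ 2 = ‖a i‖ ^ 2 - 2 * inner ℝ (a i) (a j) + ‖a j‖ ^ 2 :=
      fun i j => norm_sub_sq_real _ _
    simp_rw [h1, Finset.sum_add_distrib, Finset.sum_sub_distrib, Finset.sum_const,
      ← Finset.mul_sum, ← inner_sum, ← sum_inner, real_inner_self_eq_norm_sq]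
    simp [nsmul_eq_mul, ← Finset.mul_sum]
    ring
  have h2 : (0:ℝ) ≤ ‖∑ i ∈ C, a i‖ ^ 2 := by positivity
  linarith

lemma krum_pointwise {m d q : ℕ} (hq : 2*q+2 < m) (g : EuclideanSpace ℝ (Fin d))
    (w : Fin m → EuclideanSpace ℝ (Fin d)) (B : Finset (Fin m)) (hB : B.card ≤ q)
    (k : Fin m) (hk : ∀ i, krumScore q w k ≤ krumScore q w i) :
    ‖w k - g‖^2 ≤ (1 + 6 / ((m:ℝ) - 2*q - 2)) * ∑ j ∈ Bᶜ, ‖w j - g‖^2 := by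
  set S := ∑ j ∈ Bᶜ, ‖w j - g‖^2 with hSdef
  have hS : 0 ≤ S := Finset.sum_nonneg fun j _ => by positivity
  have hmR : (2*q+3 : ℝ) ≤ (m:ℝ) := by exact_mod_cast hq
  have hD : (0:ℝ) < (m:ℝ) - 2*q - 2 := by linarith
  have hfrac : (0:ℝ) ≤ 6 / ((m:ℝ) - 2*q - 2) := by positivity
  have hCcard : Bᶜ.card = m - B.card := by
    simp [Finset.card_compl, Fintype.card_fin]
  by_cases hkB : k ∈ B
  · -- Byzantine winner
    have hCne : Bᶜ.Nonempty := by
      rw [← Finset.card_pos, hCcard]; omega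
    -- Step A: a good index with small total distance to the good set
    have hA : ∃ i ∈ Bᶜ, ∑ j ∈ Bᶜ, ‖w i - w j‖^2 ≤ 2 * S := by
      apply Finset.exists_le_of_sum_le hCne
      have hdd := sum_sum_sq_le Bᶜ (fun j => w j - g)
      simp_rw [sub_sub_sub_cancel_right] at hdd
      calc ∑ i ∈ Bᶜ, ∑ j ∈ Bᶜ, ‖w i - w j‖^2 ≤ 2 * Bᶜ.card * S := hdd
        _ = ∑ _i ∈ Bᶜ, 2 * S := by rw [Finset.sum_const, nsmul_eq_mul]; ring
    obtain ⟨i, hiC, hi⟩ := hA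
    -- Step B: its score is ≤ 2S
    have hscorei : krumScore q w i ≤ 2 * S := by
      have hcard2 : m - q - 2 ≤ (Bᶜ.erase i).card := by
        rw [Finset.card_erase_of_mem hiC, hCcard]; omega
      obtain ⟨N, hN1, hN2⟩ := Finset.exists_subset_card_eq hcard2
      have hNsub : N ⊆ Finset.univ.erase i :=
        hN1.trans (Finset.erase_subset_erase i (Finset.subset_univ _))
      refine le_trans (krumScore_le w i hNsub hN2) (le_trans ?_ hi)
      exact Finset.sum_le_sum_of_subset_of_nonneg (hN1.trans (Finset.erase_subset _ _))
        (fun j _ _ => by positivity)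
    have hscorek : krumScore q w k ≤ 2 * S := le_trans (hk i) hscorei
    obtain ⟨N, hN1, hN2, hNval⟩ := krumScore_attained (q := q) w k
    set T := N \ B with hTdef
    have hTcard : m - 2*q - 2 ≤ T.card := by
      have h1 : (N ∩ B).card ≤ B.card := Finset.card_le_card Finset.inter_subset_right
      have h2 : T.card + (N ∩ B).card = N.card := Finset.card_sdiff_add_card_inter N B
      omega
    have hTne : T.Nonempty := Finset.card_pos.mp (by omega)
    have hTposR : (0:ℝ) < T.card := by exact_mod_cast hTne.card_pos
    -- Step D: averaging over the good neighbors of k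
    have hsum : ∑ j ∈ T, (2*‖w k - w j‖^2 + 2*‖w j - g‖^2)
        ≤ ∑ _j ∈ T, (6 * S / T.card) := by
      have e1 : ∑ j ∈ T, ‖w k - w j‖^2 ≤ 2 * S := by
        refine le_trans ?_ (hNval ▸ hscorek)
        exact Finset.sum_le_sum_of_subset_of_nonneg (Finset.sdiff_subset)
          (fun j _ _ => by positivity)
      have e2 : ∑ j ∈ T, ‖w j - g‖^2 ≤ S := by
        refine Finset.sum_le_sum_of_subset_of_nonneg ?_ (fun j _ _ => by positivity)
        intro x hx
        rw [Finset.mem_compl]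
        exact (Finset.mem_sdiff.mp hx).2
      have hT : ∑ _j ∈ T, (6 * S / (T.card:ℝ)) = 6 * S := by
        rw [Finset.sum_const, nsmul_eq_mul]; field_simp
      rw [hT, Finset.sum_add_distrib, ← Finset.mul_sum, ← Finset.mul_sum]
      linarith
    obtain ⟨j, hjT, hj⟩ := Finset.exists_le_of_sum_le hTne hsum
    have htri : ‖w k - g‖^2 ≤ 2*‖w k - w j‖^2 + 2*‖w j - g‖^2 := by
      have hle := norm_add_le (w k - w j) (w j - g)
      have he : w k - w j + (w j - g) = w k - g := by abel
      rw [he] at hle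
      nlinarith [sq_nonneg (‖w k - w j‖ - ‖w j - g‖), mul_self_le_mul_self (norm_nonneg (w k - g)) hle]
    have hdiv : 6 * S / (T.card : ℝ) ≤ 6 * S / ((m:ℝ) - 2*q - 2) := by
      apply div_le_div_of_nonneg_left (by linarith) hD
      have hcast : ((m - 2*q - 2 : ℕ) : ℝ) = (m:ℝ) - 2*q - 2 := by
        rw [Nat.cast_sub (by omega), Nat.cast_sub (by omega)]
        push_cast; ring
      calc ((m:ℝ) - 2*q - 2) = ((m - 2*q - 2 : ℕ) : ℝ) := hcast.symm
        _ ≤ (T.card : ℝ) := by exact_mod_cast hTcard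
    calc ‖w k - g‖^2 ≤ 6 * S / (T.card : ℝ) := le_trans htri hj
      _ ≤ 6 * S / ((m:ℝ) - 2*q - 2) := hdiv
      _ ≤ (1 + 6 / ((m:ℝ) - 2*q - 2)) * S := by
          have he2 : 6 * S / ((m:ℝ) - 2*q - 2) = (6 / ((m:ℝ) - 2*q - 2)) * S := by ring
          rw [he2, add_mul, one_mul]
          linarith
  · -- honest winner
    have h1 : ‖w k - g‖^2 ≤ S :=
      Finset.single_le_sum (f := fun j => ‖w j - g‖^2) (fun j _ => by positivity)
        (Finset.mem_compl.mpr hkB)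
    nlinarith

lemma krum_pointwise_honest {m d q : ℕ} (g : EuclideanSpace ℝ (Fin d))
    (w : Fin m → EuclideanSpace ℝ (Fin d)) (B : Finset (Fin m))
    (k : Fin m) (hk : k ∉ B) :
    ‖w k - g‖^2 ≤ ∑ j ∈ Bᶜ, ‖w j - g‖^2 :=
  Finset.single_le_sum (f := fun j => ‖w j - g‖^2) (fun j _ => by positivity)
    (Finset.mem_compl.mpr hk)

lemma krum_integral_bound {Ω : Type*} [MeasurableSpace Ω] (μ : MeasureTheory.Measure Ω)
    [MeasureTheory.IsProbabilityMeasure μ] {m d : ℕ} (g : EuclideanSpace ℝ (Fin d)) (V : ℝ)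
    (v : Fin m → Ω → EuclideanSpace ℝ (Fin d)) (hL2 : ∀ i, MeasureTheory.MemLp (v i) 2 μ)
    (hvar : ∀ i, ∫ ω, ‖v i ω - g‖ ^ 2 ∂μ ≤ V) (hV : 0 ≤ V)
    (B : Finset (Fin m)) (f : Ω → ℝ) (c : ℝ) (hc : 0 ≤ c)
    (hf0 : ∀ ω, 0 ≤ f ω) (hfle : ∀ ω, f ω ≤ c * ∑ j ∈ Bᶜ, ‖v j ω - g‖^2) :
    ∫ ω, f ω ∂μ ≤ c * m * V := by
  have hint : ∀ j : Fin m, MeasureTheory.Integrable (fun ω => ‖v j ω - g‖^2) μ := by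
    intro j
    have h2 : MeasureTheory.MemLp (fun ω => v j ω - g) 2 μ :=
      (hL2 j).sub (MeasureTheory.memLp_const g)
    have := h2.integrable_norm_rpow two_ne_zero ENNReal.ofNat_ne_top
    simpa [ENNReal.toReal_ofNat, Real.rpow_natCast] using this
  have hgint : MeasureTheory.Integrable (fun ω => c * ∑ j ∈ Bᶜ, ‖v j ω - g‖^2) μ :=
    (MeasureTheory.integrable_finset_sum _ fun j _ => hint j).const_mul c
  have h1 : ∫ ω, f ω ∂μ ≤ ∫ ω, c * ∑ j ∈ Bᶜ, ‖v j ω - g‖^2 ∂μ :=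
    MeasureTheory.integral_mono_of_nonneg (Filter.Eventually.of_forall hf0) hgint
      (Filter.Eventually.of_forall hfle)
  have h2 : ∫ ω, c * ∑ j ∈ Bᶜ, ‖v j ω - g‖^2 ∂μ
      = c * ∑ j ∈ Bᶜ, ∫ ω, ‖v j ω - g‖^2 ∂μ := by
    rw [MeasureTheory.integral_const_mul,
      MeasureTheory.integral_finset_sum _ (fun j _ => hint j)]
  have h3 : ∑ j ∈ Bᶜ, ∫ ω, ‖v j ω - g‖^2 ∂μ ≤ (Bᶜ.card : ℝ) * V := by
    calc ∑ j ∈ Bᶜ, ∫ ω, ‖v j ω - g‖^2 ∂μ ≤ ∑ _j ∈ Bᶜ, V :=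
          Finset.sum_le_sum fun j _ => hvar j
      _ = (Bᶜ.card : ℝ) * V := by rw [Finset.sum_const, nsmul_eq_mul]
  have h4 : (Bᶜ.card : ℝ) ≤ (m : ℝ) := by
    have : Bᶜ.card ≤ m := by
      calc Bᶜ.card ≤ (Finset.univ : Finset (Fin m)).card := Finset.card_le_card (Finset.subset_univ _)
        _ = m := by rw [Finset.card_univ, Fintype.card_fin]
    exact_mod_cast this
  have h5 : (Bᶜ.card : ℝ) * V ≤ (m : ℝ) * V := mul_le_mul_of_nonneg_right h4 hV
  calc ∫ ω, f ω ∂μ ≤ c * ∑ j ∈ Bᶜ, ∫ ω, ‖v j ω - g‖^2 ∂μ := h2 ▸ h1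
    _ ≤ c * ((m:ℝ) * V) := mul_le_mul_of_nonneg_left (le_trans h3 h5) hc
    _ = c * m * V := by ring

/-- Lemma 1 (classic Byzantine resilience of Krum with explicit constant):
let `2q + 2 < m`, let `v_1, …, v_m` be i.i.d. random vectors in `ℝ^d` with mean `g`
and `E‖v_i - g‖² ≤ V`, and let `ṽ_i = v_i` off a Byzantine set `B` with `|B| ≤ q`
while the `ṽ_i`, `i ∈ B`, are arbitrary random vectors. If `Krum` always outputs an
input vector attaining the minimal Krum score (fixed tie-breaking), then
`E‖Krum(ṽ) - g‖² ≤ (6(m-q) + (4q(m-q-2) + 4q²(m-q-1))/(m-2q-2)) V`. -/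
theorem krum_classic_byzantine_resilient
    {Ω : Type*} [MeasurableSpace Ω] (μ : Measure Ω) [IsProbabilityMeasure μ]
    (m q d : ℕ) (hq : 2 * q + 2 < m)
    (g : EuclideanSpace ℝ (Fin d)) (V : ℝ)
    (v : Fin m → Ω → EuclideanSpace ℝ (Fin d)) (hvmeas : ∀ i, Measurable (v i))
    (hindep : iIndepFun v μ)
    (hident : ∀ i j, IdentDistrib (v i) (v j) μ μ)
    (hL2 : ∀ i, MemLp (v i) 2 μ)
    (hmean : ∀ i, ∫ ω, v i ω ∂μ = g)
    (hvar : ∀ i, ∫ ω, ‖v i ω - g‖ ^ 2 ∂μ ≤ V)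
    (B : Finset (Fin m)) (hB : B.card ≤ q)
    (vt : Fin m → Ω → EuclideanSpace ℝ (Fin d))
    (hvtmeas : ∀ i, AEStronglyMeasurable (vt i) μ)
    (hvt : ∀ i ∉ B, vt i = v i)
    (Krum : (Fin m → EuclideanSpace ℝ (Fin d)) → EuclideanSpace ℝ (Fin d))
    (hKrum : ∀ w, ∃ k : Fin m, Krum w = w k ∧ ∀ i, krumScore q w k ≤ krumScore q w i)
    (hKmeas : AEStronglyMeasurable (fun ω => Krum (fun i => vt i ω)) μ) :
    ∫ ω, ‖Krum (fun i => vt i ω) - g‖ ^ 2 ∂μ ≤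
      (6 * ((m : ℝ) - q) +
        (4 * q * ((m : ℝ) - q - 2) + 4 * (q : ℝ) ^ 2 * ((m : ℝ) - q - 1)) /
          ((m : ℝ) - 2 * q - 2)) * V := by
  have hm0 : 0 < m := by omega
  have hV : 0 ≤ V :=
    le_trans (integral_nonneg fun ω => by positivity) (hvar ⟨0, hm0⟩)
  have hmR : (2*q+3 : ℝ) ≤ (m:ℝ) := by exact_mod_cast hq
  have hqR : (0:ℝ) ≤ (q:ℝ) := Nat.cast_nonneg q
  have hD : (0:ℝ) < (m:ℝ) - 2*q - 2 := by linarith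
  set K : ℝ := 6 * ((m : ℝ) - q) +
      (4 * q * ((m : ℝ) - q - 2) + 4 * (q : ℝ) ^ 2 * ((m : ℝ) - q - 1)) /
        ((m : ℝ) - 2 * q - 2) with hKdef
  have hQnn : (0:ℝ) ≤ 4 * q * ((m : ℝ) - q - 2) + 4 * (q : ℝ) ^ 2 * ((m : ℝ) - q - 1) := by
    have h1 : (0:ℝ) ≤ (m:ℝ) - q - 2 := by linarith
    have h2 : (0:ℝ) ≤ (m:ℝ) - q - 1 := by linarith
    positivity
  -- the sums over the honest set coincide for vt and v
  have hsum_eq : ∀ ω, ∑ j ∈ Bᶜ, ‖vt j ω - g‖^2 = ∑ j ∈ Bᶜ, ‖v j ω - g‖^2 := by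
    intro ω
    refine Finset.sum_congr rfl fun j hj => ?_
    rw [hvt j (Finset.mem_compl.mp hj)]
  rcases B.eq_empty_or_nonempty with hBe | hBne
  · -- no Byzantine workers: pointwise bound with constant 1
    have hpt : ∀ ω, ‖Krum (fun i => vt i ω) - g‖^2
        ≤ 1 * ∑ j ∈ Bᶜ, ‖v j ω - g‖^2 := by
      intro ω
      obtain ⟨k, hk1, _⟩ := hKrum (fun i => vt i ω)
      rw [hk1, one_mul, ← hsum_eq ω]
      have hknotB : k ∉ B := by simp [hBe]
      exact krum_pointwise_honest (q := q) g (fun i => vt i ω) B k hknotB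
    have hInt := krum_integral_bound μ g V v hL2 hvar hV B
      (fun ω => ‖Krum (fun i => vt i ω) - g‖^2) 1 zero_le_one
      (fun ω => by positivity) hpt
    have hKge : (m : ℝ) ≤ K := by
      have h1 : (m:ℝ) ≤ 6 * ((m:ℝ) - q) := by nlinarith
      have h2 : (0:ℝ) ≤ (4 * q * ((m : ℝ) - q - 2) + 4 * (q : ℝ) ^ 2 * ((m : ℝ) - q - 1)) /
          ((m : ℝ) - 2 * q - 2) := div_nonneg hQnn hD.le
      rw [hKdef]; linarith
    calc ∫ ω, ‖Krum (fun i => vt i ω) - g‖ ^ 2 ∂μ ≤ 1 * m * V := hInt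
      _ ≤ K * V := by
          have := mul_le_mul_of_nonneg_right hKge hV
          linarith
  · -- some Byzantine workers: q ≥ 1
    have hq1 : 1 ≤ q := le_trans hBne.card_pos hB
    have hq1R : (1:ℝ) ≤ (q:ℝ) := by exact_mod_cast hq1
    set c : ℝ := 1 + 6 / ((m:ℝ) - 2*q - 2) with hcdef
    have hc : 0 ≤ c := by positivity
    have hpt : ∀ ω, ‖Krum (fun i => vt i ω) - g‖^2
        ≤ c * ∑ j ∈ Bᶜ, ‖v j ω - g‖^2 := by
      intro ω
      obtain ⟨k, hk1, hk2⟩ := hKrum (fun i => vt i ω)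
      rw [hk1, ← hsum_eq ω]
      exact krum_pointwise hq g (fun i => vt i ω) B hB k hk2
    have hInt := krum_integral_bound μ g V v hL2 hvar hV B
      (fun ω => ‖Krum (fun i => vt i ω) - g‖^2) c hc
      (fun ω => by positivity) hpt
    have hKge : c * (m : ℝ) ≤ K := by
      have hnum : (0:ℝ) ≤ 6 * ((m:ℝ) - q) * ((m:ℝ) - 2*q - 2)
          + (4 * q * ((m : ℝ) - q - 2) + 4 * (q : ℝ) ^ 2 * ((m : ℝ) - q - 1))
          - ((m:ℝ) * ((m:ℝ) - 2*q - 2) + 6 * m) := by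
        nlinarith [mul_nonneg (by linarith : (0:ℝ) ≤ (m:ℝ) - 2*q - 3) (by linarith : (0:ℝ) ≤ (q:ℝ) - 1),
          sq_nonneg ((m:ℝ) - 2*q - 3), sq_nonneg ((q:ℝ) - 1),
          mul_nonneg (mul_nonneg (by linarith : (0:ℝ) ≤ (m:ℝ) - 2*q - 3) (by linarith : (0:ℝ) ≤ (q:ℝ) - 1)) (by linarith : (0:ℝ) ≤ (q:ℝ) - 1),
          mul_nonneg (mul_nonneg (by linarith : (0:ℝ) ≤ (q:ℝ) - 1) (by linarith : (0:ℝ) ≤ (q:ℝ) - 1)) (by linarith : (0:ℝ) ≤ (q:ℝ) - 1)]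
      have hkey : K - c * m = (6 * ((m:ℝ) - q) * ((m:ℝ) - 2*q - 2)
          + (4 * q * ((m : ℝ) - q - 2) + 4 * (q : ℝ) ^ 2 * ((m : ℝ) - q - 1))
          - ((m:ℝ) * ((m:ℝ) - 2*q - 2) + 6 * m)) / ((m:ℝ) - 2*q - 2) := by
        rw [hKdef, hcdef]
        have hDne : (m:ℝ) - 2*q - 2 ≠ 0 := hD.ne'
        simp only [div_eq_mul_inv]
        linear_combination (-(6 * ((m:ℝ) - q) - m)) * mul_inv_cancel₀ hDne
      have := div_nonneg hnum hD.le
      linarith [hkey ▸ this]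
    calc ∫ ω, ‖Krum (fun i => vt i ω) - g‖ ^ 2 ∂μ ≤ c * m * V := hInt
      _ ≤ K * V := mul_le_mul_of_nonneg_right hKge hV
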